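/- Let A be a finitely generated algebra over an algebraically closed field K and let M be a finitely generated A-module such that M/(ker x)M = 0 for every K-algebra homomorphism x : A → K. Then M = 0. -/

import Mathlib

/-- Weak Nullstellensatz: every maximal ideal of a finitely generated algebra over an
algebraically closed field is the kernel of a `K`-point. -/
lemma stmt12_aux (K A : Type*) [Field K] [IsAlgClosed K] [CommRing A] [Algebra K A]
    [Algebra.FiniteType K A] (m : Ideal A) [m.IsMaximal] :
    ∃ x : A →ₐ[K] K, RingHom.ker x.toRingHom = m := by
  letI : Field (A ⧸ m) := Ideal.Quotient.field m
  haveI : Algebra.FiniteType K (A ⧸ m) :=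
    Algebra.FiniteType.of_surjective (Ideal.Quotient.mkₐ K m)
      Ideal.Quotient.mk_surjective
  have h1 := finite_of_finite_type_of_isJacobsonRing K (A ⧸ m)
  haveI := @Algebra.IsIntegral.of_finite K (A ⧸ m) _ _ _ h1
  have hsurj : Function.Surjective (algebraMap K (A ⧸ m)) :=
    IsAlgClosed.algebraMap_bijective_of_isIntegral.2
  have hbij : Function.Bijective (Algebra.ofId K (A ⧸ m)) :=
    ⟨(algebraMap K (A ⧸ m)).injective, hsurj⟩
  let e : K ≃ₐ[K] (A ⧸ m) := AlgEquiv.ofBijective (Algebra.ofId K (A ⧸ m)) hbij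
  refine ⟨e.symm.toAlgHom.comp (Ideal.Quotient.mkₐ K m), ?_⟩
  ext a
  simp only [RingHom.mem_ker, AlgHom.toRingHom_eq_coe, RingHom.coe_coe, AlgHom.coe_comp,
    Function.comp_apply, AlgEquiv.coe_algHom, Ideal.Quotient.mkₐ_eq_mk]
  constructor
  · intro ha
    have : (Ideal.Quotient.mk m) a = 0 := by apply e.symm.injective; simpa using ha
    exact Ideal.Quotient.eq_zero_iff_mem.mp this
  · intro ha
    rw [Ideal.Quotient.eq_zero_iff_mem.mpr ha, map_zero]

/-- Over an algebraically closed field `K`, a finitely generated module `M` over a finitely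
generated `K`-algebra `A` with `M/(ker x)M = 0` for all `K`-points `x : A → K` is zero. -/
theorem stmt12 (K : Type*) [Field K] [IsAlgClosed K] (A : Type*) [CommRing A] [Algebra K A]
    [Algebra.FiniteType K A] (M : Type*) [AddCommGroup M] [Module A M] [Module.Finite A M]
    (h : ∀ x : A →ₐ[K] K, (RingHom.ker x.toRingHom) • (⊤ : Submodule A M) = ⊤) :
    Subsingleton M := by
  by_contra hM
  have : Nontrivial M := not_subsingleton_iff_nontrivial.mp hM
  have hann : Module.annihilator A M ≠ ⊤ := by
    intro hcon
    obtain ⟨n, hn⟩ := exists_ne (0 : M)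
    have : (1 : A) ∈ Module.annihilator A M := hcon ▸ Submodule.mem_top
    exact hn (by simpa using Module.mem_annihilator.mp this n)
  obtain ⟨m, hmmax, hle⟩ := Ideal.exists_le_maximal _ hann
  haveI := hmmax
  obtain ⟨x, hker⟩ := stmt12_aux K A m
  have hsmul := h x
  rw [hker] at hsmul
  obtain ⟨r, hr1, hr0⟩ := Submodule.exists_sub_one_mem_and_smul_eq_zero_of_fg_of_le_smul m
    (⊤ : Submodule A M) Module.Finite.fg_top (le_of_eq hsmul.symm)
  have hrann : r ∈ Module.annihilator A M :=
    Module.mem_annihilator.mpr fun n => hr0 n Submodule.mem_top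
  have h1m : (1 : A) ∈ m := by
    have := m.sub_mem (hle hrann) hr1
    simpa using this
  exact hmmax.ne_top ((Ideal.eq_top_iff_one m).mpr h1m)
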